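/- Let W be a compound Poisson random variable with finite jump intensity measure Λ on ℝ (jumps occur at rate ‖Λ‖ per unit time, jump sizes i.i.d. with law Λ/‖Λ‖), observed at time h, and let F denote its cumulative distribution function. Then for every y ∈ ℝ, the distribution function of the sum of two independent copies (the convolution) satisfies F^{*2}(y) = F(y) + Σ_{n=1}^∞ (h^n/n!) ∫_{ℝ^n} U_{x_1,...,x_n}F(y) Λ(dx_1)⋯Λ(dx_n). -/

import Mathlib

open MeasureTheory

/-- The distribution at time `h` of a compound Poisson process with finite jump intensity
measure `Λ`: jumps occur at rate `‖Λ‖` and jump sizes are i.i.d. with law `Λ/‖Λ‖`, so the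
law of `W_h` is the Poisson mixture `∑_n e^{-h‖Λ‖}(h‖Λ‖)^n/n! · (Λ/‖Λ‖)^{*n}`. -/
noncomputable def compoundPoisson (Λ : Measure ℝ) (h : ℝ) : Measure ℝ :=
  Measure.sum fun n : ℕ =>
    (ENNReal.ofReal (Real.exp (-(h * (Λ Set.univ).toReal)) *
        (h * (Λ Set.univ).toReal) ^ n / (Nat.factorial n : ℝ))) •
      Measure.map (fun x : Fin n → ℝ => ∑ i, x i)
        (Measure.pi fun _ : Fin n => (Λ Set.univ)⁻¹ • Λ)

lemma measurable_finsum (m : ℕ) : Measurable fun x : Fin m → ℝ => ∑ i, x i :=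
  Finset.measurable_sum _ fun i _ => measurable_pi_apply i

lemma pi_smul (c : ENNReal) (hc : c ≠ ⊤) (ν : Measure ℝ) [IsFiniteMeasure ν] (m : ℕ) :
    Measure.pi (fun _ : Fin m => c • ν) = c ^ m • Measure.pi (fun _ : Fin m => ν) := by
  haveI : IsFiniteMeasure (c • ν) := ⟨by
    simp only [Measure.smul_apply, smul_eq_mul]
    exact ENNReal.mul_lt_top hc.lt_top (measure_lt_top ν _)⟩
  refine Measure.pi_eq fun s hs => ?_
  simp [Measure.pi_pi, Finset.prod_mul_distrib, Finset.prod_const, mul_comm]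

lemma map_sum_reindex (Λ : Measure ℝ) [IsFiniteMeasure Λ] {ι : Type*} [Fintype ι] (k : ℕ)
    (e2 : Fin k ≃ ι) :
    Measure.map (fun u : ι → ℝ => ∑ j, u j) (Measure.pi fun _ : ι => Λ)
      = Measure.map (fun x : Fin k → ℝ => ∑ i, x i) (Measure.pi fun _ : Fin k => Λ) := by
  have hg : Measurable fun u : ι → ℝ => ∑ j, u j :=
    Finset.measurable_sum _ fun i _ => measurable_pi_apply i
  have mp2 := measurePreserving_piCongrLeft (fun _ : ι => Λ) e2
  rw [← mp2.map_eq,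
    Measure.map_map hg (MeasurableEquiv.piCongrLeft (fun _ => ℝ) e2).measurable]
  congr 1
  funext v
  simp only [Function.comp_apply]
  rw [← Equiv.sum_comp e2]
  refine Finset.sum_congr rfl fun i _ => ?_
  simp [MeasurableEquiv.coe_piCongrLeft, Equiv.piCongrLeft_apply_apply]

lemma map_sum_subset (Λ : Measure ℝ) [IsFiniteMeasure Λ] (m : ℕ) (J : Finset (Fin m)) :
    Measure.map (fun x : Fin m → ℝ => ∑ j ∈ J, x j) (Measure.pi fun _ : Fin m => Λ)
      = (Λ Set.univ) ^ (m - J.card) •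
        Measure.map (fun x : Fin J.card → ℝ => ∑ i, x i)
          (Measure.pi fun _ : Fin J.card => Λ) := by
  classical
  set p : Fin m → Prop := fun i => i ∈ J with hp
  have mp := measurePreserving_piEquivPiSubtypeProd (fun _ : Fin m => Λ) p
  set e := MeasurableEquiv.piEquivPiSubtypeProd (fun _ : Fin m => ℝ) p with he
  have hg : Measurable fun u : {i // p i} → ℝ => ∑ j, u j :=
    Finset.measurable_sum _ fun i _ => measurable_pi_apply i
  have key : (fun x : Fin m → ℝ => ∑ j ∈ J, x j)
      = (fun u : {i // p i} → ℝ => ∑ j, u j) ∘ (Prod.fst) ∘ e := by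
    funext x
    simp only [Function.comp_apply, he, MeasurableEquiv.piEquivPiSubtypeProd_apply]
    exact (Finset.sum_coe_sort J x).symm
  rw [key, ← Measure.map_map hg (measurable_fst.comp e.measurable),
    ← Measure.map_map measurable_fst e.measurable, mp.map_eq, Measure.map_fst_prod,
    Measure.map_smul]
  have e2 : Fin J.card ≃ {i // p i} := (Fintype.equivFinOfCardEq (Fintype.card_coe J)).symm
  congr 1
  · rw [Measure.pi_univ]
    simp only [Finset.prod_const, Finset.card_univ, Fintype.card_subtype_compl,
      Fintype.card_fin]
    rw [show Fintype.card {x // p x} = J.card from Fintype.card_coe J]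
  · convert map_sum_reindex Λ J.card e2 using 2
    exact congrArg (fun i => @Measure.pi (Subtype p) (fun _ => ℝ) i
      (fun _ => inferInstance) (fun _ => Λ)) (Subsingleton.elim _ _)

lemma compoundPoisson_eq (Λ : Measure ℝ) [IsFiniteMeasure Λ] (h : ℝ) (hh : 0 ≤ h) :
    compoundPoisson Λ h = Measure.sum fun n : ℕ =>
      (ENNReal.ofReal (Real.exp (-(h * (Λ Set.univ).toReal)) * h ^ n / (Nat.factorial n : ℝ))) •
        Measure.map (fun x : Fin n → ℝ => ∑ i, x i) (Measure.pi fun _ : Fin n => Λ) := by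
  unfold compoundPoisson
  congr 1; funext n
  by_cases hzero : Λ Set.univ = 0
  · have hL : Λ = 0 := Measure.measure_univ_eq_zero.mp hzero
    rcases n with _ | n
    · have h12 : Measure.pi (fun _ : Fin 0 => (Λ Set.univ)⁻¹ • Λ) =
          Measure.pi (fun _ : Fin 0 => Λ) :=
        (Measure.pi_of_empty _).trans (Measure.pi_of_empty _).symm
      rw [h12]
      simp
    · have hpi0 : Measure.pi (fun _ : Fin (n+1) => Λ) = 0 := by
        rw [← Measure.measure_univ_eq_zero, Measure.pi_univ]
        simp [hzero]
      have hν : (Λ Set.univ)⁻¹ • Λ = (0 : Measure ℝ) := by simp [hL]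
      have hpi0' : Measure.pi (fun _ : Fin (n+1) => (Λ Set.univ)⁻¹ • Λ) = 0 := by
        rw [← Measure.measure_univ_eq_zero, Measure.pi_univ]
        simp [hν]
      rw [hpi0, hpi0', Measure.map_zero, smul_zero, smul_zero]
  · have hlpos : 0 < (Λ Set.univ).toReal :=
      ENNReal.toReal_pos hzero (measure_ne_top Λ _)
    rw [pi_smul _ (ENNReal.inv_ne_top.mpr hzero) Λ n, Measure.map_smul, smul_smul]
    congr 1
    have h1 : (Λ Set.univ)⁻¹ = ENNReal.ofReal ((Λ Set.univ).toReal)⁻¹ := by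
      rw [ENNReal.ofReal_inv_of_pos hlpos, ENNReal.ofReal_toReal (measure_ne_top Λ _)]
    rw [h1, ← ENNReal.ofReal_pow (by positivity), ← ENNReal.ofReal_mul (by positivity)]
    congr 1
    field_simp
    ring_nf
    rw [mul_assoc, ← mul_pow, mul_inv_cancel₀ hlpos.ne', one_pow, mul_one]

lemma isFiniteMeasure_compoundPoisson (Λ : Measure ℝ) [IsFiniteMeasure Λ] (h : ℝ)
    (hh : 0 ≤ h) : IsFiniteMeasure (compoundPoisson Λ h) := by
  set l := (Λ Set.univ).toReal with hl
  have hl0 : 0 ≤ l := ENNReal.toReal_nonneg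
  constructor
  unfold compoundPoisson
  rw [Measure.sum_apply _ MeasurableSet.univ]
  have hb : ∀ n : ℕ,
      ((ENNReal.ofReal (Real.exp (-(h * l)) * (h * l) ^ n / (Nat.factorial n : ℝ))) •
        Measure.map (fun x : Fin n → ℝ => ∑ i, x i)
          (Measure.pi fun _ : Fin n => (Λ Set.univ)⁻¹ • Λ)) Set.univ
        ≤ ENNReal.ofReal (Real.exp (-(h * l)) * (h * l) ^ n / (Nat.factorial n : ℝ)) := by
    intro n
    rw [Measure.smul_apply, Measure.map_apply (measurable_finsum n) MeasurableSet.univ,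
      Set.preimage_univ, Measure.pi_univ]
    have hmu1 : ∀ i : Fin n, ((Λ Set.univ)⁻¹ • Λ) Set.univ ≤ 1 := fun i => by
      rw [Measure.smul_apply, smul_eq_mul]; exact ENNReal.inv_mul_le_one _
    calc _ ≤ (ENNReal.ofReal (Real.exp (-(h * l)) * (h * l) ^ n / (Nat.factorial n : ℝ)))
          * ∏ _i : Fin n, 1 :=
            mul_le_mul_right (Finset.prod_le_prod' fun i _ => hmu1 i) _
      _ = _ := by simp
  calc (∑' n, _) ≤ ∑' n : ℕ, ENNReal.ofReal (Real.exp (-(h * l)) * (h * l) ^ n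
        / (Nat.factorial n : ℝ)) := ENNReal.tsum_le_tsum hb
    _ = ENNReal.ofReal (∑' n : ℕ, Real.exp (-(h * l)) * (h * l) ^ n / (Nat.factorial n : ℝ)) := by
        rw [ENNReal.ofReal_tsum_of_nonneg (fun n => by positivity)]
        simp_rw [mul_div_assoc]
        exact (Real.summable_pow_div_factorial (h * l)).mul_left _
    _ < ⊤ := ENNReal.ofReal_lt_top

/-- Theorem 2 (Main) of the paper: with `F` the c.d.f. of the compound Poisson variable
`W_h` and `F^{*2}` the c.d.f. of the sum of two independent copies (the convolution),
`F^{*2}(y) = F(y) + ∑_{n≥1} (h^n/n!) ∫_{ℝ^n} U_{x_1,…,x_n}F(y) Λ(dx_1)⋯Λ(dx_n)`,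
where `U_{x_1,…,x_n}F(y) = ∑_{J ⊆ {1,…,n}} (-1)^{n-|J|} F(y - ∑_{j∈J} x_j)`. -/
theorem convolution_expansion (Λ : Measure ℝ) [IsFiniteMeasure Λ] (hΛ0 : Λ {0} = 0)
    (h : ℝ) (hh : 0 < h)
    (F : ℝ → ℝ) (hFdef : ∀ y, F y = ((compoundPoisson Λ h) (Set.Iic y)).toReal)
    (y : ℝ) :
    ((Measure.map (fun p : ℝ × ℝ => p.1 + p.2)
        ((compoundPoisson Λ h).prod (compoundPoisson Λ h))) (Set.Iic y)).toReal =
      F y + ∑' n : ℕ,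
        (h ^ (n + 1) / (Nat.factorial (n + 1) : ℝ)) *
          ∫ x : Fin (n + 1) → ℝ,
            (∑ J : Finset (Fin (n + 1)),
              (-1 : ℝ) ^ ((n + 1) - J.card) * F (y - ∑ j ∈ J, x j))
            ∂(Measure.pi fun _ : Fin (n + 1) => Λ) := by
  classical
  set μ := compoundPoisson Λ h with hμ
  haveI hfin : IsFiniteMeasure μ := isFiniteMeasure_compoundPoisson Λ h hh.le
  set l := (Λ Set.univ).toReal with hldef
  have hl0 : 0 ≤ l := ENNReal.toReal_nonneg
  set M := (μ Set.univ).toReal with hMdef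
  -- basic facts about F
  have Fmono : Monotone F := by
    intro a b hab
    rw [hFdef a, hFdef b]
    exact ENNReal.toReal_mono (measure_ne_top _ _)
      (measure_mono (Set.Iic_subset_Iic.mpr hab))
  have Fmeas : Measurable F := Fmono.measurable
  have Fnn : ∀ t, 0 ≤ F t := fun t => by rw [hFdef t]; exact ENNReal.toReal_nonneg
  have Fle : ∀ t, F t ≤ M := fun t => by
    rw [hFdef t, hMdef, hμ]
    exact ENNReal.toReal_mono (measure_ne_top _ _) (measure_mono (Set.subset_univ _))
  have hofF : ∀ t, ENNReal.ofReal (F t) = μ (Set.Iic t) := fun t => by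
    rw [hFdef t, hμ]; exact ENNReal.ofReal_toReal (measure_ne_top _ _)
  -- the basic integrals
  set B : ℕ → ℝ :=
    fun m => ∫ x : Fin m → ℝ, F (y - ∑ i, x i) ∂(Measure.pi fun _ : Fin m => Λ) with hBdef
  have intF : ∀ (m : ℕ) (s : (Fin m → ℝ) → ℝ), Measurable s →
      Integrable (fun x => F (y - s x)) (Measure.pi fun _ : Fin m => Λ) := by
    intro m s hs
    have hm : Measurable fun x => F (y - s x) := Fmeas.comp (measurable_const.sub hs)
    refine ⟨hm.aestronglyMeasurable, ?_⟩
    refine HasFiniteIntegral.of_bounded (C := M) ?_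
    filter_upwards with x
    rw [Real.norm_eq_abs, abs_of_nonneg (Fnn _)]
    exact Fle _
  have piuniv : ∀ m : ℕ, ((Measure.pi fun _ : Fin m => Λ) Set.univ).toReal = l ^ m := by
    intro m
    rw [Measure.pi_univ, Finset.prod_const, ENNReal.toReal_pow, ← hldef]
    simp
  have Bnn : ∀ m, 0 ≤ B m := fun m => integral_nonneg fun x => Fnn _
  have Bbd : ∀ m, B m ≤ M * l ^ m := by
    intro m
    calc B m ≤ ∫ _x : Fin m → ℝ, M ∂(Measure.pi fun _ : Fin m => Λ) :=
          integral_mono (intF m _ (measurable_finsum m)) (integrable_const M)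
            fun x => Fle _
      _ = M * l ^ m := by rw [integral_const, smul_eq_mul, measureReal_def, piuniv m, mul_comm]
  have M0 : 0 ≤ M := ENNReal.toReal_nonneg
  -- series pieces
  set u : ℕ → ℝ := fun j => (-(h * l)) ^ j / (Nat.factorial j : ℝ) with hudef
  set v : ℕ → ℝ := fun k => h ^ k / (Nat.factorial k : ℝ) * B k with hvdef
  have hu_norm : Summable fun j => ‖u j‖ := by
    have hs := Real.summable_pow_div_factorial |(-(h * l))|
    refine hs.congr fun j => ?_
    rw [hudef]
    simp [abs_div, abs_pow, abs_mul, Nat.abs_cast]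
  have hv_norm : Summable fun k => ‖v k‖ := by
    refine Summable.of_nonneg_of_le (fun k => norm_nonneg _) (fun k => ?_)
      (((Real.summable_pow_div_factorial (h * l)).mul_left M))
    rw [hvdef, Real.norm_eq_abs,
      abs_of_nonneg (mul_nonneg (by positivity) (Bnn k))]
    calc h ^ k / (Nat.factorial k : ℝ) * B k
        ≤ h ^ k / (Nat.factorial k : ℝ) * (M * l ^ k) :=
          mul_le_mul_of_nonneg_left (Bbd k) (by positivity)
      _ = M * ((h * l) ^ k / (Nat.factorial k : ℝ)) := by rw [mul_pow]; ring
  set g : ℕ → ℝ := fun m => ∑ k ∈ Finset.range (m + 1), v k * u (m - k) with hgdef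
  have hg_sum : Summable g :=
    (summable_norm_sum_mul_range_of_summable_norm hv_norm hu_norm).of_norm
  have htsum_g : (∑' k, v k) * (∑' j, u j) = ∑' m, g m :=
    tsum_mul_tsum_eq_tsum_sum_range_of_summable_norm hv_norm hu_norm
  have hexp : Real.exp (-(h * l)) = ∑' j, u j := by
    rw [Real.exp_eq_exp_ℝ, NormedSpace.exp_eq_tsum_div]
  have B0 : B 0 = F y := by
    rw [hBdef]
    simp only
    rw [show (Measure.pi fun _ : Fin 0 => Λ) = Measure.dirac (isEmptyElim : Fin 0 → ℝ) from
      Measure.pi_of_empty _]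
    have hsm : Measurable (fun x : Fin 0 → ℝ => F (y - ∑ i, x i)) :=
      Fmeas.comp (measurable_const.sub (measurable_finsum 0))
    rw [integral_dirac' _ _ hsm.stronglyMeasurable]
    simp
  have g0 : g 0 = F y := by
    rw [hgdef]
    simp [hudef, hvdef, B0]
  -- per-subset integral
  have hJ : ∀ (m : ℕ) (J : Finset (Fin m)),
      (∫ x : Fin m → ℝ, F (y - ∑ j ∈ J, x j) ∂(Measure.pi fun _ : Fin m => Λ))
        = l ^ (m - J.card) * B J.card := by
    intro m J
    have hsJ : Measurable fun x : Fin m → ℝ => ∑ j ∈ J, x j :=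
      Finset.measurable_sum _ fun i _ => measurable_pi_apply i
    have hFy : Measurable fun s : ℝ => F (y - s) :=
      Fmeas.comp (measurable_const.sub measurable_id)
    calc (∫ x : Fin m → ℝ, F (y - ∑ j ∈ J, x j) ∂(Measure.pi fun _ : Fin m => Λ))
        = ∫ s, F (y - s) ∂(Measure.map (fun x : Fin m → ℝ => ∑ j ∈ J, x j)
            (Measure.pi fun _ : Fin m => Λ)) :=
          (integral_map hsJ.aemeasurable hFy.aestronglyMeasurable).symm
      _ = l ^ (m - J.card) * B J.card := by
          rw [map_sum_subset, integral_smul_measure,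
            integral_map (measurable_finsum _).aemeasurable hFy.aestronglyMeasurable,
            ENNReal.toReal_pow, smul_eq_mul, ← hldef]
  -- per-term computation
  have hterm : ∀ m : ℕ,
      (h ^ m / (Nat.factorial m : ℝ)) *
        ∫ x : Fin m → ℝ, (∑ J : Finset (Fin m),
          (-1 : ℝ) ^ (m - J.card) * F (y - ∑ j ∈ J, x j))
          ∂(Measure.pi fun _ : Fin m => Λ) = g m := by
    intro m
    have hint : ∀ J : Finset (Fin m), Integrable
        (fun x : Fin m → ℝ => (-1 : ℝ) ^ (m - J.card) * F (y - ∑ j ∈ J, x j))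
        (Measure.pi fun _ : Fin m => Λ) :=
      fun J => (intF m _ (Finset.measurable_sum _ fun i _ => measurable_pi_apply i)).const_mul _
    rw [integral_finset_sum _ fun J _ => hint J]
    have hJi : ∀ J : Finset (Fin m),
        (∫ x : Fin m → ℝ, (-1 : ℝ) ^ (m - J.card) * F (y - ∑ j ∈ J, x j)
          ∂(Measure.pi fun _ : Fin m => Λ))
          = (-1 : ℝ) ^ (m - J.card) * (l ^ (m - J.card) * B J.card) := by
      intro J
      rw [integral_const_mul, hJ m J]
    rw [Finset.sum_congr rfl fun J _ => hJi J]
    -- group by cardinality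
    have hgrp : (∑ J : Finset (Fin m), (-1 : ℝ) ^ (m - J.card) * (l ^ (m - J.card) * B J.card))
        = ∑ k ∈ Finset.range (m + 1), (m.choose k) •
            ((-1 : ℝ) ^ (m - k) * (l ^ (m - k) * B k)) := by
      rw [← Finset.powerset_univ,
        Finset.sum_powerset_apply_card (fun k => (-1 : ℝ) ^ (m - k) * (l ^ (m - k) * B k)),
        Finset.card_univ, Fintype.card_fin]
    rw [hgrp, Finset.mul_sum, hgdef]
    refine Finset.sum_congr rfl fun k hk => ?_
    have hkm : k ≤ m := Nat.lt_succ_iff.mp (Finset.mem_range.mp hk)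
    have hfact : (m.choose k : ℝ) * (Nat.factorial k : ℝ) * (Nat.factorial (m - k) : ℝ)
        = (Nat.factorial m : ℝ) := by
      exact_mod_cast Nat.choose_mul_factorial_mul_factorial hkm
    have hpow : h ^ m = h ^ k * h ^ (m - k) := by
      rw [← pow_add, Nat.add_sub_cancel' hkm]
    rw [hudef, hvdef]
    simp only [nsmul_eq_mul]
    rw [neg_pow (h * l) (m - k), mul_pow, hpow]
    have fm : (Nat.factorial m : ℝ) ≠ 0 := Nat.cast_ne_zero.mpr (Nat.factorial_ne_zero m)
    have fk : (Nat.factorial k : ℝ) ≠ 0 := Nat.cast_ne_zero.mpr (Nat.factorial_ne_zero k)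
    have fmk : (Nat.factorial (m - k) : ℝ) ≠ 0 := Nat.cast_ne_zero.mpr (Nat.factorial_ne_zero _)
    field_simp
    rw [← hfact]
    ring
  -- summability of the main real series
  have sumReal : Summable fun m : ℕ => Real.exp (-(h * l)) * h ^ m / (Nat.factorial m : ℝ) * B m := by
    refine Summable.of_nonneg_of_le
      (fun m => mul_nonneg (by positivity) (Bnn m)) (fun m => ?_)
      (((Real.summable_pow_div_factorial (h * l)).mul_left (Real.exp (-(h * l)) * M)))
    calc Real.exp (-(h * l)) * h ^ m / (Nat.factorial m : ℝ) * B m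
        ≤ Real.exp (-(h * l)) * h ^ m / (Nat.factorial m : ℝ) * (M * l ^ m) :=
          mul_le_mul_of_nonneg_left (Bbd m) (by positivity)
      _ = Real.exp (-(h * l)) * M * ((h * l) ^ m / (Nat.factorial m : ℝ)) := by
          rw [mul_pow]; ring
  -- main LHS computation
  have hsetm : MeasurableSet {p : ℝ × ℝ | p.1 + p.2 ≤ y} :=
    measurableSet_le (measurable_fst.add measurable_snd) measurable_const
  have hLHS : (Measure.map (fun p : ℝ × ℝ => p.1 + p.2) (μ.prod μ)) (Set.Iic y)
      = ENNReal.ofReal (∑' m : ℕ,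
          Real.exp (-(h * l)) * h ^ m / (Nat.factorial m : ℝ) * B m) := by
    rw [Measure.map_apply (f := fun p : ℝ × ℝ => p.1 + p.2) (measurable_fst.add measurable_snd) measurableSet_Iic]
    rw [show (fun p : ℝ × ℝ => p.1 + p.2) ⁻¹' Set.Iic y = {p : ℝ × ℝ | p.1 + p.2 ≤ y} from rfl]
    rw [Measure.prod_apply hsetm]
    have h1 : ∀ a : ℝ, μ (Prod.mk a ⁻¹' {p : ℝ × ℝ | p.1 + p.2 ≤ y})
        = ENNReal.ofReal (F (y - a)) := by
      intro a
      have hset2 : Prod.mk a ⁻¹' {p : ℝ × ℝ | p.1 + p.2 ≤ y} = Set.Iic (y - a) := by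
        ext b
        simp only [Set.mem_preimage, Set.mem_setOf_eq, Set.mem_Iic]
        exact ⟨fun hb => le_sub_iff_add_le'.mpr hb, fun hb => le_sub_iff_add_le'.mp hb⟩
      rw [hset2, ← hofF]
    rw [lintegral_congr h1]
    conv_lhs => rw [hμ, compoundPoisson_eq Λ h hh.le]
    rw [lintegral_sum_measure]
    have h2 : ∀ m : ℕ, (∫⁻ a, ENNReal.ofReal (F (y - a)) ∂(
        (ENNReal.ofReal (Real.exp (-(h * (Λ Set.univ).toReal)) * h ^ m /
          (Nat.factorial m : ℝ))) •
          Measure.map (fun x : Fin m → ℝ => ∑ i, x i) (Measure.pi fun _ : Fin m => Λ)))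
        = ENNReal.ofReal (Real.exp (-(h * l)) * h ^ m / (Nat.factorial m : ℝ) * B m) := by
      intro m
      have hofm : Measurable (fun a : ℝ => ENNReal.ofReal (F (y - a))) :=
        (Fmeas.comp (measurable_const.sub measurable_id)).ennreal_ofReal
      rw [lintegral_smul_measure,
        lintegral_map hofm (measurable_finsum m),
        ← ofReal_integral_eq_lintegral_ofReal (intF m _ (measurable_finsum m))
          (ae_of_all _ fun x => Fnn _), smul_eq_mul,
        ← ENNReal.ofReal_mul (by positivity), ← hldef]
    rw [tsum_congr h2, ← ENNReal.ofReal_tsum_of_nonneg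
      (fun m => mul_nonneg (by positivity) (Bnn m)) sumReal]
  -- put everything together
  rw [hLHS, ENNReal.toReal_ofReal (tsum_nonneg fun m =>
    mul_nonneg (by positivity) (Bnn m))]
  have hstep : (∑' m : ℕ, Real.exp (-(h * l)) * h ^ m / (Nat.factorial m : ℝ) * B m)
      = ∑' m : ℕ, g m := by
    rw [tsum_congr (fun m => show Real.exp (-(h * l)) * h ^ m / (Nat.factorial m : ℝ) * B m
        = Real.exp (-(h * l)) * v m by rw [hvdef]; ring),
      tsum_mul_left, hexp, mul_comm, htsum_g]
  rw [hstep, Summable.tsum_eq_zero_add hg_sum, g0]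
  congr 1
  exact tsum_congr fun n => (hterm (n + 1)).symm
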